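/- Let Γ be a quasi-spider's web with graph metric d_Γ and Γ̂ the spider's web completion obtained by adding, for same-level vertices x=p^j(v), y=p^j(w) with v ∼ w in Γ, an edge between x and y. Then there is a constant K (depending only on the quasi-spider's web parameter m) such that d_{Γ̂}(x,y) ≤ d_Γ(x,y) ≤ d_{Γ̂}(x,y) + 2K for all vertices x, y; in particular the identity map is a strict 2K-rough isometry between (Γ, d_Γ) and (Γ̂, d_{Γ̂}). -/

import Mathlib

/-- A quasi-spider's web with parameter `m`: a graph built from a rooted tree
(root `o`, predecessor `p`, level `lvl`) by adding same-level edges such that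
whenever two same-level vertices are joined by an edge, their `k`-th predecessors
coincide or are neighbours for every `k` with `m ≤ k ≤` the common level. -/
structure QuasiSpiderWeb (V : Type*) where
  G : SimpleGraph V
  o : V
  p : V → V
  lvl : V → ℕ
  m : ℕ
  m_pos : 1 ≤ m
  lvl_root : lvl o = 0
  root_eq : ∀ x, lvl x = 0 → x = o
  p_root : p o = o
  p_lvl : ∀ x, x ≠ o → lvl (p x) + 1 = lvl x
  p_adj : ∀ x, x ≠ o → G.Adj x (p x)
  connected : G.Connected
  adj_lvl : ∀ x y, G.Adj x y → lvl x = lvl y ∨ x = p y ∨ y = p x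
  quasi : ∀ x y, G.Adj x y → lvl x = lvl y → ∀ k, m ≤ k → k ≤ lvl x →
    p^[k] x = p^[k] y ∨ G.Adj (p^[k] x) (p^[k] y)

/-- The spider's web completion `Γ̂` of a quasi-spider's web: the same vertices,
with an extra edge between `p^[j] v` and `p^[j] w` whenever `v ∼ w` are same-level
neighbours. -/
def QuasiSpiderWeb.hat {V : Type*} (Q : QuasiSpiderWeb V) : SimpleGraph V where
  Adj x y := Q.G.Adj x y ∨
    (x ≠ y ∧ ∃ (j : ℕ) (v w : V), Q.G.Adj v w ∧ Q.lvl v = Q.lvl w ∧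
      Q.p^[j] v = x ∧ Q.p^[j] w = y)
  symm := by
    constructor
    rintro x y (h | ⟨hne, j, v, w, hvw, hl, hv, hw⟩)
    · exact Or.inl h.symm
    · exact Or.inr ⟨hne.symm, j, w, v, hvw.symm, hl.symm, hw, hv⟩
  loopless := by
    constructor
    rintro x (h | ⟨hne, -⟩)
    · exact Q.G.ne_of_adj h rfl
    · exact hne rfl

namespace QuasiSpiderWeb

variable {V : Type*} (Q : QuasiSpiderWeb V)

lemma iterate_lvl_eq_root : ∀ (n : ℕ) (x : V), Q.lvl x = n → Q.p^[n] x = Q.o := by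
  intro n
  induction n with
  | zero => intro x hx; exact Q.root_eq x hx
  | succ n ihn =>
    intro x hx
    have hxo : x ≠ Q.o := by
      intro h; rw [h, Q.lvl_root] at hx; omega
    have hl := Q.p_lvl x hxo
    rw [Function.iterate_succ_apply]
    exact ihn (Q.p x) (by omega)

/-- Iterating the predecessor at least `lvl x` times reaches the root. -/
lemma iterate_eq_root (x : V) (k : ℕ) (hk : Q.lvl x ≤ k) : Q.p^[k] x = Q.o := by
  obtain ⟨j, rfl⟩ : ∃ j, k = j + Q.lvl x := ⟨k - Q.lvl x, by omega⟩
  rw [Function.iterate_add_apply, Q.iterate_lvl_eq_root (Q.lvl x) x rfl,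
    Function.iterate_fixed Q.p_root]

lemma dist_p_le (x : V) : ∀ n, Q.G.dist x (Q.p^[n] x) ≤ n := by
  intro n
  induction n with
  | zero => simp [SimpleGraph.dist_self]
  | succ n ihn =>
    rw [Function.iterate_succ_apply']
    by_cases h : Q.p^[n] x = Q.o
    · rw [h, Q.p_root, ← h]; omega
    · have hadj := Q.p_adj _ h
      have h1 : Q.G.dist (Q.p^[n] x) (Q.p (Q.p^[n] x)) ≤ 1 := by
        simpa using SimpleGraph.dist_le hadj.toWalk
      have := Q.connected.dist_triangle (u := x) (v := Q.p^[n] x) (w := Q.p (Q.p^[n] x))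
      omega

/-- Key lemma: the `m`-fold predecessor map sends `hat`-edges to `G`-edges or equal. -/
lemma key {x y : V} (h : Q.hat.Adj x y) :
    Q.p^[Q.m] x = Q.p^[Q.m] y ∨ Q.G.Adj (Q.p^[Q.m] x) (Q.p^[Q.m] y) := by
  rcases h with h | ⟨hne, j, v, w, hvw, hl, rfl, rfl⟩
  · rcases Q.adj_lvl x y h with hl | hxy | hyx
    · by_cases hm : Q.m ≤ Q.lvl x
      · exact Q.quasi x y h hl Q.m le_rfl hm
      · left
        rw [Q.iterate_eq_root x Q.m (by omega), Q.iterate_eq_root y Q.m (by omega)]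
    · subst hxy
      rw [← Function.iterate_succ_apply]
      by_cases ho : Q.p^[Q.m] y = Q.o
      · left; rw [Function.iterate_succ_apply', ho, Q.p_root]
      · right
        rw [Function.iterate_succ_apply']
        exact (Q.p_adj _ ho).symm
    · subst hyx
      rw [← Function.iterate_succ_apply]
      by_cases ho : Q.p^[Q.m] x = Q.o
      · left; rw [Function.iterate_succ_apply', ho, Q.p_root]
      · right
        rw [Function.iterate_succ_apply']
        exact Q.p_adj _ ho
  · rw [← Function.iterate_add_apply, ← Function.iterate_add_apply]
    by_cases hk : Q.m + j ≤ Q.lvl v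
    · exact Q.quasi v w hvw hl (Q.m + j) (by omega) hk
    · left
      rw [Q.iterate_eq_root v (Q.m + j) (by omega),
        Q.iterate_eq_root w (Q.m + j) (by omega)]

lemma dist_map_le {x y : V} (W : Q.hat.Walk x y) :
    Q.G.dist (Q.p^[Q.m] x) (Q.p^[Q.m] y) ≤ W.length := by
  induction W with
  | nil => simp [SimpleGraph.dist_self]
  | cons h W' ih =>
    rename_i a b c
    rcases Q.key h with heq | hadj
    · rw [SimpleGraph.Walk.length_cons, heq]; omega
    · have h1 : Q.G.dist (Q.p^[Q.m] a) (Q.p^[Q.m] b) ≤ 1 := by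
        simpa using SimpleGraph.dist_le hadj.toWalk
      have h2 := Q.connected.dist_triangle
        (u := Q.p^[Q.m] a) (v := Q.p^[Q.m] b) (w := Q.p^[Q.m] c)
      rw [SimpleGraph.Walk.length_cons]
      omega

end QuasiSpiderWeb

/-- The graph metric of a quasi-spider's web `Γ` and that of its
spider's web completion `Γ̂` differ by a bounded amount: there is `K` (depending
only on the parameter `m`) with `d_{Γ̂} ≤ d_Γ ≤ d_{Γ̂} + 2K`; in particular the
identity is a strict `2K`-rough isometry between `(Γ, d_Γ)` and `(Γ̂, d_{Γ̂})`. -/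
theorem stmt_19 {V : Type*} (Q : QuasiSpiderWeb V) :
    ∃ K : ℕ, K ≤ Q.m ∧ ∀ x y : V,
      Q.hat.dist x y ≤ Q.G.dist x y ∧ Q.G.dist x y ≤ Q.hat.dist x y + 2 * K := by
  have hle : Q.G ≤ Q.hat := fun {x y} h => Or.inl h
  have hhc : Q.hat.Connected := Q.connected.mono hle
  refine ⟨Q.m, le_rfl, fun x y => ⟨?_, ?_⟩⟩
  · obtain ⟨W, hW⟩ := Q.connected.exists_walk_length_eq_dist x y
    have := SimpleGraph.dist_le (W.mapLe hle)
    rwa [SimpleGraph.Walk.mapLe, SimpleGraph.Walk.length_map, hW] at this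
  · obtain ⟨W, hW⟩ := hhc.exists_walk_length_eq_dist x y
    have h1 : Q.G.dist (Q.p^[Q.m] x) (Q.p^[Q.m] y) ≤ Q.hat.dist x y := hW ▸ Q.dist_map_le W
    have h2 := Q.dist_p_le x Q.m
    have h3 := Q.dist_p_le y Q.m
    have t1 := Q.connected.dist_triangle (u := x) (v := Q.p^[Q.m] x) (w := y)
    have t2 := Q.connected.dist_triangle (u := Q.p^[Q.m] x) (v := Q.p^[Q.m] y) (w := y)
    have hc : Q.G.dist (Q.p^[Q.m] y) y = Q.G.dist y (Q.p^[Q.m] y) := SimpleGraph.dist_comm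
    omega
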